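/- There is an absolute constant C > 0 such that for every L ≥ 1, every positive integer N with Δx = L/N ≤ 1, every γ > 0, and all grid points x, y ∈ 𝒳 = {iΔx : i = 0,…,N−1}, the second-order difference of the exponential weight satisfies | (𝒟⁺𝒟⁻ e^{−γ d_L(·,y)})(x) | = | ( e^{−γ d_L(x+Δx,y)} − 2 e^{−γ d_L(x,y)} + e^{−γ d_L(x−Δx,y)} ) / Δx² | ≤ C (γ² + 2γ) e^{γ Δx} e^{−γ d_L(x,y)}. -/

import Mathlib

open scoped BigOperators Real
open MeasureTheory

noncomputable section

/-- The periodic distance `min_{k ∈ ℤ} |x - L k|`. -/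
def dtilde (L x : ℝ) : ℝ := sInf {r : ℝ | ∃ k : ℤ, r = |x - L * k|}

/-- The mollified periodic distance `d_L(x, 0)`. -/
def dmol (L x : ℝ) : ℝ :=
  Real.sqrt (L ^ 2 / 4 + 1) -
    Real.sqrt ((Real.sqrt (L ^ 2 / 4 + 1) - Real.sqrt (dtilde L x ^ 2 + 1)) ^ 2 + 1)

/-- The mollified periodic distance `d_L(x, y)`. -/
def dL (L x y : ℝ) : ℝ := dmol L (x - y)

/-- The grid point `x_i = i Δx`, with `Δx = L / N`. -/
def gridX (L : ℝ) (N : ℕ) (i : ZMod N) : ℝ := (ZMod.val i : ℝ) * (L / N)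

/-- Forward difference operator on periodic lattice functions. -/
def Dplus {N : ℕ} (dx : ℝ) (f : ZMod N → ℂ) : ZMod N → ℂ :=
  fun i => (f (i + 1) - f i) / (dx : ℂ)

/-- Backward difference operator on periodic lattice functions. -/
def Dminus {N : ℕ} (dx : ℝ) (f : ZMod N → ℂ) : ZMod N → ℂ :=
  fun i => (f i - f (i - 1)) / (dx : ℂ)

/-- Second order finite difference Laplacian `Δ = 𝒟⁺𝒟⁻`. -/
def discLap {N : ℕ} (dx : ℝ) (f : ZMod N → ℂ) : ZMod N → ℂ :=
  Dplus dx (Dminus dx f)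

/-- Weighted `ℓ²` norm `(w Σ |f i|²)^{1/2}`; with `w = Δx` this is `‖·‖_{L²(𝒳)}`,
with `w = Δk` this is `‖·‖_{L²(𝒦)}`. -/
def wnorm {N : ℕ} [NeZero N] (w : ℝ) (f : ZMod N → ℂ) : ℝ :=
  Real.sqrt (w * ∑ i : ZMod N, ‖f i‖ ^ 2)

/-- The Fourier grid point `k = n Δk` with `n ∈ (-N/2, N/2]` corresponding to `j ∈ ZMod N`. -/
def kval (L : ℝ) (N : ℕ) (j : ZMod N) : ℝ :=
  ((if (ZMod.val j : ℤ) ≤ (N : ℤ) / 2 then (ZMod.val j : ℤ) else (ZMod.val j : ℤ) - (N : ℤ)) : ℝ) *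
    (2 * Real.pi / L)

/-- Discrete Fourier transform `f̂_k = Δx Σ_x e^{-i k x} f(x)`. -/
def dft (L : ℝ) {N : ℕ} [NeZero N] (f : ZMod N → ℂ) (j : ZMod N) : ℂ :=
  ((L / N : ℝ) : ℂ) *
    ∑ i : ZMod N, Complex.exp (-Complex.I * (kval L N j : ℂ) * ((gridX L N i : ℝ) : ℂ)) * f i

/-- Inverse discrete Fourier transform `f(x) = (1/L) Σ_k e^{i k x} f̂_k`. -/
def idft (L : ℝ) {N : ℕ} [NeZero N] (fh : ZMod N → ℂ) (i : ZMod N) : ℂ :=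
  ((1 / L : ℝ) : ℂ) *
    ∑ j : ZMod N, Complex.exp (Complex.I * (kval L N j : ℂ) * ((gridX L N i : ℝ) : ℂ)) * fh j

/-- Periodic difference operator on the Fourier grid, `(𝒟 f̂)_k = (f̂_k - f̂_{k-Δk})/Δk`. -/
def Dk {N : ℕ} (dk : ℝ) (fh : ZMod N → ℂ) : ZMod N → ℂ :=
  fun j => (fh j - fh (j - 1)) / (dk : ℂ)

/-- Real-valued version of the periodic difference operator on the Fourier grid. -/
def DkR {N : ℕ} (dk : ℝ) (fh : ZMod N → ℝ) : ZMod N → ℝ :=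
  fun j => (fh j - fh (j - 1)) / dk

/-- The distance `d(x,0)`: equal to `x` on `[0, L/2)` and `L - x` on `[L/2, L)`. -/
def dfun (L x : ℝ) : ℝ := if x < L / 2 then x else L - x

/-- The mollified symbol `ĥ_k = θ̂(k)(k² - k_c²) + k_c²` on the Fourier grid, `k_c = π N / L`. -/
def hsym (L : ℝ) (N : ℕ) (θ : ℝ → ℝ) (j : ZMod N) : ℝ :=
  θ (kval L N j) * ((kval L N j) ^ 2 - (Real.pi * N / L) ^ 2) + (Real.pi * N / L) ^ 2

/-- The Fourier space Hamiltonian matrix `Ĥ_{kl} = ĥ_k δ_{kl} + (1/L) V̂_{k-l}`. -/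
def Hmat (L : ℝ) {N : ℕ} [NeZero N] (hh : ZMod N → ℝ) (V : ZMod N → ℝ) :
    Matrix (ZMod N) (ZMod N) ℂ :=
  Matrix.of fun k l =>
    (if k = l then (hh k : ℂ) else 0) + ((1 / L : ℝ) : ℂ) * dft L (fun i => (V i : ℂ)) (k - l)

end



noncomputable section

/-- smooth profile -/
def Fg (m r : ℝ) : ℝ :=
  m - Real.sqrt ((m - Real.sqrt (r ^ 2 + 1)) ^ 2 + 1)

def Ag (r : ℝ) : ℝ := r / Real.sqrt (r ^ 2 + 1)

def Fg' (m r : ℝ) : ℝ := Ag (m - Real.sqrt (r ^ 2 + 1)) * Ag r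

lemma sq1_pos (r : ℝ) : (0:ℝ) < r ^ 2 + 1 := by positivity

lemma sqrt_sq1_pos (r : ℝ) : 0 < Real.sqrt (r ^ 2 + 1) :=
  Real.sqrt_pos.2 (sq1_pos r)

lemma one_le_sqrt_sq1 (r : ℝ) : 1 ≤ Real.sqrt (r ^ 2 + 1) := by
  have := Real.sqrt_le_sqrt (show (1:ℝ) ≤ r ^ 2 + 1 by nlinarith)
  simpa using this

lemma abs_le_sqrt_sq1 (r : ℝ) : |r| ≤ Real.sqrt (r ^ 2 + 1) := by
  rw [← Real.sqrt_sq_eq_abs]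
  exact Real.sqrt_le_sqrt (by nlinarith)

lemma abs_Ag_le_one (r : ℝ) : |Ag r| ≤ 1 := by
  rw [Ag, abs_div, abs_of_pos (sqrt_sq1_pos r)]
  rw [div_le_one (sqrt_sq1_pos r)]
  exact abs_le_sqrt_sq1 r

/-- derivative of `sqrt (r^2+1)` -/
lemma hasDerivAt_sq1 (r : ℝ) :
    HasDerivAt (fun x => Real.sqrt (x ^ 2 + 1)) (Ag r) r := by
  have h1 : HasDerivAt (fun x : ℝ => x ^ 2 + 1) (2 * r) r := by
    simpa using ((hasDerivAt_pow 2 r).add_const 1)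
  have h2 := (Real.hasDerivAt_sqrt (ne_of_gt (sq1_pos r))).comp r h1
  refine h2.congr_deriv ?_
  symm
  rw [Ag]
  field_simp

lemma hasDerivAt_Ag (r : ℝ) :
    HasDerivAt Ag (1 / (Real.sqrt (r ^ 2 + 1)) ^ 3) r := by
  have h := (hasDerivAt_id r).div (hasDerivAt_sq1 r) (ne_of_gt (sqrt_sq1_pos r))
  refine h.congr_deriv ?_
  symm
  have hs : Real.sqrt (r ^ 2 + 1) ^ 2 = r ^ 2 + 1 := Real.sq_sqrt (by positivity)
  rw [Ag]
  simp only [id]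
  field_simp
  nlinarith [sqrt_sq1_pos r, hs]

lemma abs_Ag'_le_one (r : ℝ) : |1 / (Real.sqrt (r ^ 2 + 1)) ^ 3| ≤ 1 := by
  rw [abs_div, abs_one, abs_of_pos (by positivity : (0:ℝ) < Real.sqrt (r^2+1) ^ 3)]
  rw [div_le_one (by positivity)]
  have h := one_le_sqrt_sq1 r
  nlinarith [h, sq_nonneg (Real.sqrt (r ^ 2 + 1))]

/-- MVT helper: global derivative bound gives Lipschitz bound. -/
lemma lip_of_deriv (f f' : ℝ → ℝ) (C : ℝ)
    (hd : ∀ x, HasDerivAt f (f' x) x) (hb : ∀ x, |f' x| ≤ C) (x y : ℝ) :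
    |f x - f y| ≤ C * |x - y| := by
  have := Convex.norm_image_sub_le_of_norm_hasDerivWithin_le
    (f := f) (f' := f') (s := Set.univ)
    (fun z _ => (hd z).hasDerivWithinAt) (fun z _ => hb z) convex_univ
    (Set.mem_univ y) (Set.mem_univ x)
  simpa [Real.norm_eq_abs] using this

lemma Ag_lip (x y : ℝ) : |Ag x - Ag y| ≤ |x - y| := by
  simpa using lip_of_deriv Ag (fun r => 1 / (Real.sqrt (r ^ 2 + 1)) ^ 3) 1
    hasDerivAt_Ag abs_Ag'_le_one x y

lemma sq1_lip (x y : ℝ) : |Real.sqrt (x ^ 2 + 1) - Real.sqrt (y ^ 2 + 1)| ≤ |x - y| := by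
  simpa using lip_of_deriv (fun r => Real.sqrt (r ^ 2 + 1)) Ag 1
    hasDerivAt_sq1 abs_Ag_le_one x y

lemma hasDerivAt_Fg (m r : ℝ) : HasDerivAt (Fg m) (Fg' m r) r := by
  have hv : HasDerivAt (fun x : ℝ => m - Real.sqrt (x ^ 2 + 1)) (-Ag r) r :=
    (hasDerivAt_sq1 r).const_sub m
  have hv2 : HasDerivAt (fun x : ℝ => (m - Real.sqrt (x ^ 2 + 1)) ^ 2 + 1)
      (2 * (m - Real.sqrt (r ^ 2 + 1)) * (-Ag r)) r := by
    simpa [mul_comm, mul_assoc] using (((hasDerivAt_pow 2 _).comp r hv).add_const 1)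
  have hpos : ((m - Real.sqrt (r ^ 2 + 1)) ^ 2 + 1) ≠ 0 := by positivity
  have h3 := ((Real.hasDerivAt_sqrt hpos).comp r hv2).const_sub m
  refine h3.congr_deriv ?_
  symm
  rw [Fg', Ag, Ag]
  have := Real.sqrt_pos.2 (show (0:ℝ) < (m - Real.sqrt (r ^ 2 + 1)) ^ 2 + 1 by positivity)
  field_simp

lemma abs_Fg'_le_one (m r : ℝ) : |Fg' m r| ≤ 1 := by
  rw [Fg', abs_mul]
  calc |Ag (m - Real.sqrt (r ^ 2 + 1))| * |Ag r| ≤ 1 * 1 :=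
        mul_le_mul (abs_Ag_le_one _) (abs_Ag_le_one _) (abs_nonneg _) zero_le_one
    _ = 1 := by ring

lemma Fg_lip (m x y : ℝ) : |Fg m x - Fg m y| ≤ |x - y| := by
  simpa using lip_of_deriv (Fg m) (Fg' m) 1 (hasDerivAt_Fg m) (abs_Fg'_le_one m) x y

lemma Fg'_lip (m x y : ℝ) : |Fg' m x - Fg' m y| ≤ 2 * |x - y| := by
  have key : Fg' m x - Fg' m y =
      Ag (m - Real.sqrt (x ^ 2 + 1)) * (Ag x - Ag y) +
      Ag y * (Ag (m - Real.sqrt (x ^ 2 + 1)) - Ag (m - Real.sqrt (y ^ 2 + 1))) := by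
    rw [Fg', Fg']; ring
  rw [key]
  have h1 : |Ag (m - Real.sqrt (x ^ 2 + 1)) * (Ag x - Ag y)| ≤ |x - y| := by
    rw [abs_mul]
    calc |Ag (m - Real.sqrt (x^2+1))| * |Ag x - Ag y| ≤ 1 * |x - y| :=
          mul_le_mul (abs_Ag_le_one _) (Ag_lip x y) (abs_nonneg _) zero_le_one
      _ = |x - y| := by ring
  have h2 : |Ag y * (Ag (m - Real.sqrt (x ^ 2 + 1)) - Ag (m - Real.sqrt (y ^ 2 + 1)))| ≤ |x - y| := by
    rw [abs_mul]
    have : |Ag (m - Real.sqrt (x ^ 2 + 1)) - Ag (m - Real.sqrt (y ^ 2 + 1))| ≤ |x - y| := by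
      calc |Ag (m - Real.sqrt (x ^ 2 + 1)) - Ag (m - Real.sqrt (y ^ 2 + 1))|
          ≤ |(m - Real.sqrt (x ^ 2 + 1)) - (m - Real.sqrt (y ^ 2 + 1))| := Ag_lip _ _
        _ = |Real.sqrt (y ^ 2 + 1) - Real.sqrt (x ^ 2 + 1)| := by ring_nf
        _ ≤ |y - x| := sq1_lip y x
        _ = |x - y| := abs_sub_comm y x
    calc |Ag y| * |Ag (m - Real.sqrt (x^2+1)) - Ag (m - Real.sqrt (y^2+1))| ≤ 1 * |x - y| :=
          mul_le_mul (abs_Ag_le_one _) this (abs_nonneg _) zero_le_one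
      _ = |x - y| := by ring
  calc |_ + _| ≤ _ := abs_add_le _ _
    _ ≤ 2 * |x - y| := by linarith

/-- Taylor bound with Lipschitz derivative. -/
lemma taylor2 (f f' : ℝ → ℝ) (K : ℝ) (hK0 : 0 ≤ K)
    (hd : ∀ x, HasDerivAt f (f' x) x)
    (hK : ∀ x y, |f' x - f' y| ≤ K * |x - y|) (a u : ℝ) :
    |f (a + u) - f a - u * f' a| ≤ K * u ^ 2 := by
  have hdg : ∀ x, HasDerivAt (fun x => f x - f' a * x) (f' x - f' a) x := by
    intro x
    have h := (hd x).sub ((hasDerivAt_id x).const_mul (f' a))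
    exact h.congr_deriv (by simp)
  have bound : ∀ x ∈ Set.uIcc a (a + u), ‖f' x - f' a‖ ≤ K * |u| := by
    intro x hx
    have hxa : |x - a| ≤ |u| := by
      rw [Set.uIcc_eq_union, Set.mem_union, Set.mem_Icc, Set.mem_Icc] at hx
      rcases hx with ⟨h1, h2⟩ | ⟨h1, h2⟩ <;>
        · rw [abs_le]
          constructor <;> nlinarith [le_abs_self u, neg_abs_le u]
    calc ‖f' x - f' a‖ = |f' x - f' a| := rfl
      _ ≤ K * |x - a| := hK x a
      _ ≤ K * |u| := mul_le_mul_of_nonneg_left hxa hK0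
  have := Convex.norm_image_sub_le_of_norm_hasDerivWithin_le
    (f := fun x => f x - f' a * x) (f' := fun x => f' x - f' a) (s := Set.uIcc a (a + u))
    (fun z hz => (hdg z).hasDerivWithinAt) bound (convex_uIcc _ _)
    Set.left_mem_uIcc Set.right_mem_uIcc
  have h2 : |f (a + u) - f' a * (a + u) - (f a - f' a * a)| ≤ K * |u| * |u| := by
    simpa [Real.norm_eq_abs, add_sub_cancel_left] using this
  calc |f (a + u) - f a - u * f' a|
      = |f (a + u) - f' a * (a + u) - (f a - f' a * a)| := by ring_nf
    _ ≤ K * |u| * |u| := h2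
    _ = K * u ^ 2 := by rw [mul_assoc, abs_mul_abs_self]; ring


lemma dtilde_le (L x : ℝ) (k : ℤ) : dtilde L x ≤ |x - L * k| := by
  apply csInf_le
  · exact ⟨0, by rintro r ⟨k, rfl⟩; positivity⟩
  · exact ⟨k, rfl⟩

lemma dtilde_small {L x : ℝ} (hL : 0 < L) (hx : |x| ≤ L / 2) : dtilde L x = |x| := by
  apply le_antisymm
  · simpa using dtilde_le L x 0
  · apply le_csInf
    · exact ⟨|x|, 0, by simp⟩
    rintro r ⟨k, rfl⟩
    rcases eq_or_ne k 0 with rfl | hk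
    · simp
    · have h1 : (1:ℝ) ≤ |(k:ℝ)| := by exact_mod_cast Int.one_le_abs hk
      have h2 : |L * (k:ℝ)| - |x| ≤ |x - L * k| := by
        have := abs_sub_abs_le_abs_sub (L * (k:ℝ)) x
        rw [abs_sub_comm] at this
        linarith
      have h3 : |L * (k:ℝ)| = L * |(k:ℝ)| := by rw [abs_mul, abs_of_pos hL]
      nlinarith [abs_nonneg x]

lemma dtilde_neg (L x : ℝ) : dtilde L (-x) = dtilde L x := by
  unfold dtilde
  congr 1
  ext r
  constructor
  · rintro ⟨k, rfl⟩
    exact ⟨-k, by push_cast; rw [show -x - L * (k:ℝ) = -(x - L * (-(k:ℝ))) by ring, abs_neg]⟩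
  · rintro ⟨k, rfl⟩
    exact ⟨-k, by push_cast; rw [show x - L * (k:ℝ) = -(-x - L * (-(k:ℝ))) by ring, abs_neg]⟩

lemma dtilde_add (L x : ℝ) : dtilde L (x + L) = dtilde L x := by
  unfold dtilde
  congr 1
  ext r
  constructor
  · rintro ⟨k, rfl⟩
    exact ⟨k - 1, by push_cast; ring_nf⟩
  · rintro ⟨k, rfl⟩
    exact ⟨k + 1, by push_cast; ring_nf⟩

lemma dtilde_periodic (L : ℝ) : Function.Periodic (dtilde L) L := dtilde_add L

lemma dtilde_exists {L : ℝ} (hL : 0 < L) (y : ℝ) : ∃ k : ℤ, dtilde L y = |y - L * k| := by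
  set n : ℤ := ⌊y / L⌋ with hn
  set s : ℝ := y - n * L with hs
  have hs0 : 0 ≤ s := Int.sub_floor_div_mul_nonneg y hL
  have hs1 : s < L := Int.sub_floor_div_mul_lt y hL
  have hper : dtilde L s = dtilde L y := (dtilde_periodic L).sub_int_mul_eq n
  rcases le_or_gt s (L / 2) with hc | hc
  · refine ⟨n, ?_⟩
    rw [← hper, dtilde_small hL (by rw [abs_of_nonneg hs0]; exact hc)]
    congr 1
    rw [hs]
    push_cast
    ring
  · refine ⟨n + 1, ?_⟩
    have h2 : dtilde L (s - L) = dtilde L s := by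
      have := dtilde_add L (s - L)
      simpa using this.symm
    rw [← hper, ← h2, dtilde_small hL (by rw [abs_of_nonpos (by linarith)]; linarith)]
    have : y - L * ((n:ℝ) + 1) = s - L := by rw [hs]; ring
    push_cast
    rw [this]

lemma dtilde_lip {L : ℝ} (hL : 0 < L) (x y : ℝ) :
    |dtilde L x - dtilde L y| ≤ |x - y| := by
  have key : ∀ a b : ℝ, dtilde L a - dtilde L b ≤ |a - b| := by
    intro a b
    obtain ⟨k, hk⟩ := dtilde_exists hL b
    have h1 : dtilde L a ≤ |a - L * k| := dtilde_le L a k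
    have h2 : |a - L * k| ≤ |a - b| + |b - L * k| := abs_sub_le a b (L * k)
    rw [hk]
    linarith
  rw [abs_sub_le_iff]
  exact ⟨key x y, by rw [abs_sub_comm]; exact key y x⟩

lemma dmol_eq_Fg (L x : ℝ) :
    dmol L x = Fg (Real.sqrt (L ^ 2 / 4 + 1)) (dtilde L x) := rfl

lemma Fg_even (m r : ℝ) : Fg m (-r) = Fg m r := by
  rw [Fg, Fg, neg_pow]
  norm_num

lemma dmol_periodic (L : ℝ) : Function.Periodic (dmol L) L := by
  intro x
  rw [dmol_eq_Fg, dmol_eq_Fg, dtilde_add]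

lemma dmol_neg (L x : ℝ) : dmol L (-x) = dmol L x := by
  rw [dmol_eq_Fg, dmol_eq_Fg, dtilde_neg]

lemma dmol_small {L x : ℝ} (hL : 0 < L) (hx : |x| ≤ L / 2) :
    dmol L x = Fg (Real.sqrt (L ^ 2 / 4 + 1)) x := by
  rw [dmol_eq_Fg, dtilde_small hL hx]
  rcases abs_cases x with ⟨h, _⟩ | ⟨h, _⟩
  · rw [h]
  · rw [h, Fg_even]

lemma dmol_lip {L : ℝ} (hL : 0 < L) (x y : ℝ) :
    |dmol L x - dmol L y| ≤ |x - y| := by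
  rw [dmol_eq_Fg, dmol_eq_Fg]
  calc |Fg _ (dtilde L x) - Fg _ (dtilde L y)| ≤ |dtilde L x - dtilde L y| := Fg_lip _ _ _
    _ ≤ |x - y| := dtilde_lip hL x y

lemma Fg'_half (L : ℝ) : Fg' (Real.sqrt (L ^ 2 / 4 + 1)) (L / 2) = 0 := by
  rw [Fg']
  have h : (L / 2) ^ 2 + 1 = L ^ 2 / 4 + 1 := by ring
  rw [h, sub_self]
  simp [Ag]


lemma key_main {L : ℝ} (hL : 0 < L) {h t : ℝ} (h0 : 0 < h) (hh : h ≤ L / 2)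
    (ht0 : 0 ≤ t) (ht1 : t ≤ L / 2) :
    |dmol L (t + h) - 2 * dmol L t + dmol L (t - h)| ≤ 8 * h ^ 2 := by
  set m := Real.sqrt (L ^ 2 / 4 + 1) with hm
  have taylor : ∀ a u : ℝ, |Fg m (a + u) - Fg m a - u * Fg' m a| ≤ 2 * u ^ 2 :=
    taylor2 (Fg m) (Fg' m) 2 (by norm_num) (hasDerivAt_Fg m) (Fg'_lip m)
  have e0 : dmol L t = Fg m t := dmol_small hL (by rw [abs_of_nonneg ht0]; exact ht1)
  have e1 : dmol L (t - h) = Fg m (t - h) := by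
    apply dmol_small hL
    rw [abs_le]; constructor <;> linarith
  have T : |Fg m (t + h) - 2 * Fg m t + Fg m (t - h)| ≤ 4 * h ^ 2 := by
    have t1 := taylor t h
    have t2 := taylor t (-h)
    rw [show t + -h = t - h by ring] at t2
    have hsq : (-h) ^ 2 = h ^ 2 := by ring
    rw [hsq] at t2
    calc |Fg m (t + h) - 2 * Fg m t + Fg m (t - h)|
        = |(Fg m (t + h) - Fg m t - h * Fg' m t) + (Fg m (t - h) - Fg m t - (-h) * Fg' m t)| := by
          ring_nf
      _ ≤ |Fg m (t + h) - Fg m t - h * Fg' m t| + |Fg m (t - h) - Fg m t - (-h) * Fg' m t| :=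
          abs_add_le _ _
      _ ≤ 2 * h ^ 2 + 2 * h ^ 2 := add_le_add t1 t2
      _ = 4 * h ^ 2 := by ring
  by_cases hc : t + h ≤ L / 2
  · have e2 : dmol L (t + h) = Fg m (t + h) := by
      apply dmol_small hL
      rw [abs_of_nonneg (by linarith)]; exact hc
    rw [e0, e1, e2]
    nlinarith [T, sq_nonneg h]
  · push_neg at hc
    have e2 : dmol L (t + h) = Fg m (L - t - h) := by
      have p1 : dmol L (t + h) = dmol L (t + h - L) := by
        have := dmol_periodic L (t + h - L)
        simpa using this
      rw [p1, dmol_small hL (by rw [abs_of_nonpos (by linarith)]; linarith)]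
      rw [show t + h - L = -(L - t - h) by ring, Fg_even]
    set u := t + h - L / 2 with hu
    have hu0 : 0 < u := by rw [hu]; linarith
    have hu1 : u ≤ h := by rw [hu]; linarith
    have R : |Fg m (L - t - h) - Fg m (t + h)| ≤ 4 * h ^ 2 := by
      have r1 := taylor (L / 2) u
      have r2 := taylor (L / 2) (-u)
      rw [hm, Fg'_half L, ← hm] at r1 r2
      have hx1 : L / 2 + u = t + h := by rw [hu]; ring
      have hx2 : L / 2 + -u = L - t - h := by rw [hu]; ring
      rw [hx1] at r1
      rw [hx2] at r2
      have hsq : (-u) ^ 2 = u ^ 2 := by ring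
      rw [hsq] at r2
      calc |Fg m (L - t - h) - Fg m (t + h)|
          = |(Fg m (L - t - h) - Fg m (L / 2) - (-u) * 0) -
              (Fg m (t + h) - Fg m (L / 2) - u * 0)| := by ring_nf
        _ ≤ |Fg m (L - t - h) - Fg m (L / 2) - (-u) * 0| +
              |Fg m (t + h) - Fg m (L / 2) - u * 0| := abs_sub _ _
        _ ≤ 2 * u ^ 2 + 2 * u ^ 2 := add_le_add r2 r1
        _ ≤ 4 * h ^ 2 := by nlinarith
    rw [e0, e1, e2]
    calc |Fg m (L - t - h) - 2 * Fg m t + Fg m (t - h)|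
        = |(Fg m (t + h) - 2 * Fg m t + Fg m (t - h)) + (Fg m (L - t - h) - Fg m (t + h))| := by
          ring_nf
      _ ≤ |Fg m (t + h) - 2 * Fg m t + Fg m (t - h)| + |Fg m (L - t - h) - Fg m (t + h)| :=
          abs_add_le _ _
      _ ≤ 4 * h ^ 2 + 4 * h ^ 2 := add_le_add T R
      _ = 8 * h ^ 2 := by ring

lemma key {L : ℝ} (hL : 0 < L) {h : ℝ} (t : ℝ) (h0 : 0 < h) (hh : h ≤ L / 2) :
    |dmol L (t + h) - 2 * dmol L t + dmol L (t - h)| ≤ 8 * h ^ 2 := by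
  set n : ℤ := ⌊t / L⌋ with hn
  set s : ℝ := t - n * L with hs
  have hs0 : 0 ≤ s := Int.sub_floor_div_mul_nonneg t hL
  have hs1 : s < L := Int.sub_floor_div_mul_lt t hL
  have E : ∀ d : ℝ, dmol L (s + d) = dmol L (t + d) := by
    intro d
    have := (dmol_periodic L).sub_int_mul_eq (x := t + d) n
    rw [show t + d - n * L = s + d by rw [hs]; ring] at this
    exact this
  have E0 : dmol L s = dmol L t := by simpa using E 0
  have Eh : dmol L (s + h) = dmol L (t + h) := E h
  have Emh : dmol L (s - h) = dmol L (t - h) := by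
    have := E (-h)
    rw [show s + -h = s - h by ring, show t + -h = t - h by ring] at this
    exact this
  rw [← E0, ← Eh, ← Emh]
  rcases le_or_gt s (L / 2) with hc | hc
  · exact key_main hL h0 hh hs0 hc
  · set s' : ℝ := L - s with hs'
    have f1 : dmol L (s' + h) = dmol L (s - h) := by
      rw [show s' + h = -(s - h) + L by rw [hs']; ring]
      rw [dmol_periodic L, dmol_neg]
    have f2 : dmol L s' = dmol L s := by
      rw [show s' = -s + L by rw [hs']; ring]
      rw [dmol_periodic L, dmol_neg]
    have f3 : dmol L (s' - h) = dmol L (s + h) := by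
      rw [show s' - h = -(s + h) + L by rw [hs']; ring]
      rw [dmol_periodic L, dmol_neg]
    have := key_main hL h0 hh (show (0:ℝ) ≤ s' by rw [hs']; linarith)
      (show s' ≤ L / 2 by rw [hs']; linarith)
    rw [f1, f2, f3] at this
    calc |dmol L (s + h) - 2 * dmol L s + dmol L (s - h)|
        = |dmol L (s - h) - 2 * dmol L s + dmol L (s + h)| := by ring_nf
      _ ≤ 8 * h ^ 2 := this

lemma exp_taylor (s : ℝ) : |Real.exp s - 1 - s| ≤ s ^ 2 * Real.exp |s| := by
  have bd : ∀ x : ℝ, |Real.exp x - 1| ≤ |x| * Real.exp |x| := by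
    intro x
    rcases le_or_gt 0 x with hx | hx
    · rw [abs_of_nonneg hx, abs_of_nonneg (by nlinarith [Real.one_le_exp hx] : (0:ℝ) ≤ Real.exp x - 1)]
      have hinv : Real.exp (-x) * Real.exp x = 1 := by rw [← Real.exp_add]; simp
      nlinarith [Real.add_one_le_exp (-x), Real.exp_pos x, hinv]
    · rw [abs_of_neg hx, abs_of_nonpos (by nlinarith [Real.exp_lt_one_iff.mpr hx] : Real.exp x - 1 ≤ 0)]
      have h1 : 1 - Real.exp x ≤ -x := by nlinarith [Real.add_one_le_exp x]
      have h2 : (1:ℝ) ≤ Real.exp (-x) := Real.one_le_exp (by linarith)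
      nlinarith
  have hdg : ∀ x : ℝ, HasDerivAt (fun x => Real.exp x - x) (Real.exp x - 1) x := by
    intro x
    exact (Real.hasDerivAt_exp x).sub (hasDerivAt_id x)
  have bound : ∀ x ∈ Set.uIcc 0 s, ‖Real.exp x - 1‖ ≤ |s| * Real.exp |s| := by
    intro x hx
    have hxs : |x| ≤ |s| := by
      rw [Set.uIcc_eq_union, Set.mem_union, Set.mem_Icc, Set.mem_Icc] at hx
      rcases hx with ⟨h1, h2⟩ | ⟨h1, h2⟩ <;>
        · rw [abs_le]
          constructor <;> nlinarith [le_abs_self s, neg_abs_le s]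
    calc ‖Real.exp x - 1‖ = |Real.exp x - 1| := rfl
      _ ≤ |x| * Real.exp |x| := bd x
      _ ≤ |s| * Real.exp |s| :=
          mul_le_mul hxs (Real.exp_le_exp.2 hxs) (Real.exp_pos _).le (abs_nonneg s)
  have := Convex.norm_image_sub_le_of_norm_hasDerivWithin_le
    (f := fun x => Real.exp x - x) (f' := fun x => Real.exp x - 1) (s := Set.uIcc 0 s)
    (fun z hz => (hdg z).hasDerivWithinAt) bound (convex_uIcc _ _)
    Set.left_mem_uIcc Set.right_mem_uIcc
  have h2 : |Real.exp s - s - (Real.exp 0 - 0)| ≤ |s| * Real.exp |s| * |s - 0| := by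
    simpa [Real.norm_eq_abs] using this
  rw [Real.exp_zero] at h2
  calc |Real.exp s - 1 - s| = |Real.exp s - s - (1 - 0)| := by ring_nf
    _ ≤ |s| * Real.exp |s| * |s - 0| := h2
    _ = s ^ 2 * Real.exp |s| := by
        rw [sub_zero]
        rw [mul_comm (|s|) (Real.exp |s|), mul_assoc, abs_mul_abs_self]
        ring

end


lemma core {L : ℝ} (hL0 : 0 < L) {N : ℕ} (hNpos : 0 < N) {γ : ℝ} (hγ : 0 < γ) (t : ℝ) :
    |(Real.exp (-γ * dmol L (t + L / N)) - 2 * Real.exp (-γ * dmol L t) +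
        Real.exp (-γ * dmol L (t - L / N))) / (L / N) ^ 2| ≤
      4 * (γ ^ 2 + 2 * γ) * Real.exp (γ * (L / N)) * Real.exp (-γ * dmol L t) := by
  have hN : (0:ℝ) < (N:ℝ) := by exact_mod_cast hNpos
  set δ := L / (N:ℝ) with hδ
  have hδ0 : 0 < δ := div_pos hL0 hN
  rcases Nat.lt_or_ge N 2 with hN2 | hN2
  · -- N = 1
    have hN1 : N = 1 := by omega
    have hδL : δ = L := by rw [hδ, hN1]; norm_num
    rw [hδL]
    have p1 : dmol L (t + L) = dmol L t := dmol_periodic L t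
    have p2 : dmol L (t - L) = dmol L t := by
      have := dmol_periodic L (t - L)
      simpa using this.symm
    rw [p1, p2]
    have hz : Real.exp (-γ * dmol L t) - 2 * Real.exp (-γ * dmol L t) +
        Real.exp (-γ * dmol L t) = 0 := by ring
    rw [hz, zero_div, abs_zero]
    positivity
  · -- N ≥ 2
    have hN2' : (2:ℝ) ≤ (N:ℝ) := by exact_mod_cast hN2
    have hδh : δ ≤ L / 2 := by
      rw [hδ, div_le_div_iff₀ hN two_pos]
      nlinarith
    set a := dmol L (t + δ) - dmol L t with ha_def
    set b := dmol L (t - δ) - dmol L t with hb_def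
    have ha : |a| ≤ δ := by
      have := dmol_lip hL0 (t + δ) t
      rw [show t + δ - t = δ by ring, abs_of_pos hδ0] at this
      rw [ha_def]; exact this
    have hb : |b| ≤ δ := by
      have := dmol_lip hL0 (t - δ) t
      rw [show t - δ - t = -δ by ring, abs_neg, abs_of_pos hδ0] at this
      rw [hb_def]; exact this
    have hab : |a + b| ≤ 8 * δ ^ 2 := by
      have hkey := key hL0 t hδ0 hδh
      rw [show a + b = dmol L (t + δ) - 2 * dmol L t + dmol L (t - δ) by
        rw [ha_def, hb_def]; ring]
      exact hkey
    set E := Real.exp (-γ * dmol L t) with hE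
    have hEpos : 0 < E := Real.exp_pos _
    set P := (Real.exp (-γ * a) - 1 - (-γ * a)) + (Real.exp (-γ * b) - 1 - (-γ * b)) -
      γ * (a + b) with hP_def
    have expa : Real.exp (-γ * dmol L (t + δ)) = E * Real.exp (-γ * a) := by
      rw [hE, ← Real.exp_add]
      congr 1
      rw [ha_def]; ring
    have expb : Real.exp (-γ * dmol L (t - δ)) = E * Real.exp (-γ * b) := by
      rw [hE, ← Real.exp_add]
      congr 1
      rw [hb_def]; ring
    have eqnum : Real.exp (-γ * dmol L (t + δ)) - 2 * Real.exp (-γ * dmol L t) +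
        Real.exp (-γ * dmol L (t - δ)) = E * P := by
      rw [expa, expb, hP_def, hE]; ring
    have he1 : (1:ℝ) ≤ Real.exp (γ * δ) := Real.one_le_exp (by positivity)
    have tbound : ∀ c : ℝ, |c| ≤ δ →
        |Real.exp (-γ * c) - 1 - (-γ * c)| ≤ γ ^ 2 * δ ^ 2 * Real.exp (γ * δ) := by
      intro c hc
      have h1 := exp_taylor (-γ * c)
      have h2 : |(-γ * c)| = γ * |c| := by
        rw [abs_mul, abs_neg, abs_of_pos hγ]
      have h3 : Real.exp |(-γ * c)| ≤ Real.exp (γ * δ) := by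
        rw [h2]
        exact Real.exp_le_exp.2 (mul_le_mul_of_nonneg_left hc hγ.le)
      have h4 : (-γ * c) ^ 2 = γ ^ 2 * c ^ 2 := by ring
      have h5 : c ^ 2 ≤ δ ^ 2 := by
        rw [← sq_abs c]
        nlinarith [abs_nonneg c]
      calc |Real.exp (-γ * c) - 1 - (-γ * c)| ≤ (-γ * c) ^ 2 * Real.exp |(-γ * c)| := h1
        _ = γ ^ 2 * c ^ 2 * Real.exp |(-γ * c)| := by rw [h4]
        _ ≤ γ ^ 2 * c ^ 2 * Real.exp (γ * δ) := by
            apply mul_le_mul_of_nonneg_left h3 (by positivity)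
        _ ≤ γ ^ 2 * δ ^ 2 * Real.exp (γ * δ) := by
            apply mul_le_mul_of_nonneg_right _ (Real.exp_pos _).le
            apply mul_le_mul_of_nonneg_left h5 (by positivity)
    have hPb : |P| ≤ 2 * (γ ^ 2 * δ ^ 2 * Real.exp (γ * δ)) + 8 * γ * δ ^ 2 := by
      have t1 := tbound a ha
      have t2 := tbound b hb
      have t3 : |γ * (a + b)| ≤ 8 * γ * δ ^ 2 := by
        rw [abs_mul, abs_of_pos hγ]
        nlinarith
      calc |P| ≤ |(Real.exp (-γ * a) - 1 - (-γ * a)) + (Real.exp (-γ * b) - 1 - (-γ * b))| +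
            |γ * (a + b)| := by rw [hP_def]; exact abs_sub _ _
        _ ≤ |Real.exp (-γ * a) - 1 - (-γ * a)| + |Real.exp (-γ * b) - 1 - (-γ * b)| +
            |γ * (a + b)| := by gcongr; exact abs_add_le _ _
        _ ≤ 2 * (γ ^ 2 * δ ^ 2 * Real.exp (γ * δ)) + 8 * γ * δ ^ 2 := by linarith
    have hPh : |P| / δ ^ 2 ≤ 4 * (γ ^ 2 + 2 * γ) * Real.exp (γ * δ) := by
      rw [div_le_iff₀ (pow_pos hδ0 2)]
      have key1 : (0:ℝ) ≤ γ * δ ^ 2 * (Real.exp (γ * δ) - 1) := by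
        apply mul_nonneg (by positivity)
        linarith
      nlinarith [sq_nonneg γ, pow_pos hδ0 2, hγ]
    rw [eqnum, abs_div, abs_mul, abs_of_pos hEpos, abs_of_pos (pow_pos hδ0 2)]
    calc E * |P| / δ ^ 2 = E * (|P| / δ ^ 2) := by ring
      _ ≤ E * (4 * (γ ^ 2 + 2 * γ) * Real.exp (γ * δ)) :=
          mul_le_mul_of_nonneg_left hPh hEpos.le
      _ = 4 * (γ ^ 2 + 2 * γ) * Real.exp (γ * δ) * E := by ring


/-- bound on the second-order difference of the exponential weight. -/
theorem stmt_3 :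
    ∃ C > (0 : ℝ),
      ∀ (L : ℝ) (N : ℕ) [NeZero N], 1 ≤ L → L / N ≤ 1 →
      ∀ γ : ℝ, 0 < γ → ∀ i j : ZMod N,
        |(Real.exp (-γ * dL L (gridX L N i + L / N) (gridX L N j)) -
              2 * Real.exp (-γ * dL L (gridX L N i) (gridX L N j)) +
              Real.exp (-γ * dL L (gridX L N i - L / N) (gridX L N j))) / (L / N) ^ 2| ≤
          C * (γ ^ 2 + 2 * γ) * Real.exp (γ * (L / N)) *
            Real.exp (-γ * dL L (gridX L N i) (gridX L N j)) := by
  --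

  refine ⟨4, by norm_num, ?_⟩
  intro L N _ hL hdx γ hγ i j
  have hL0 : (0:ℝ) < L := lt_of_lt_of_le one_pos hL
  have hNpos : 0 < N := Nat.pos_of_ne_zero (NeZero.ne N)
  have hcore := core hL0 hNpos hγ (gridX L N i - gridX L N j)
  have d1 : dL L (gridX L N i + L / N) (gridX L N j) =
      dmol L (gridX L N i - gridX L N j + L / N) := by
    simp only [dL]; congr 1; ring
  have d2 : dL L (gridX L N i) (gridX L N j) =
      dmol L (gridX L N i - gridX L N j) := rfl
  have d3 : dL L (gridX L N i - L / N) (gridX L N j) =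
      dmol L (gridX L N i - gridX L N j - L / N) := by
    simp only [dL]; congr 1; ring
  rw [d1, d2, d3]
  exact hcore
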